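/- Let (E, w) be a finite weighted graph. Then the graph monoid M(E,w) is a group if and only if E is acyclic. -/

import Mathlib

/-- The out-neighbourhood sum `Σ_{e ∈ s⁻¹(v)} r(e)` in the free commutative
monoid `V →₀ ℕ`, for a graph with finitely many edges. -/
noncomputable def frTrans {V E : Type} [Fintype E] [DecidableEq V] (s r : E → V) (v : V) : V →₀ ℕ :=
  ∑ e ∈ Finset.univ.filter (fun e => s e = v), Finsupp.single (r e) 1

/-- The vertex weight: `w(v) = max{w(e) : e ∈ s⁻¹(v)}` for non-sinks and
`w(v) = 1` for sinks. -/
def fwVert {V E : Type} [Fintype E] [DecidableEq V] (s : E → V) (w : E → ℕ) (v : V) : ℕ :=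
  max 1 ((Finset.univ.filter (fun e => s e = v)).sup w)

/-- The defining relations of the graph monoid `M(E,w)`:
`w(v)·v = Σ_{e ∈ s⁻¹(v)} r(e)` for every vertex `v` (so sinks become `0`). -/
def gRel {V E : Type} [Fintype E] [DecidableEq V] (s r : E → V) (w : E → ℕ)
    (a b : V →₀ ℕ) : Prop :=
  ∃ v : V, a = Finsupp.single v (fwVert s w v) ∧ b = frTrans s r v

/-- The graph monoid `M(E,w)` of a finite weighted graph: the free commutative
monoid on the vertices modulo the congruence generated by the relations. -/
abbrev graphMonoid {V E : Type} [Fintype E] [DecidableEq V] (s r : E → V) (w : E → ℕ) :=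
  (addConGen (gRel s r w)).Quotient

/-- The class of `a : V →₀ ℕ` in the graph monoid `M(E,w)`. -/
noncomputable def gMk {V E : Type} [Fintype E] [DecidableEq V] (s r : E → V) (w : E → ℕ)
    (a : V →₀ ℕ) : graphMonoid s r w :=
  (addConGen (gRel s r w)).mk' a

/-- One vertex steps to another if there is an edge from the first to the second. -/
def eRel {V E : Type} (s r : E → V) (x y : V) : Prop := ∃ e : E, s e = x ∧ r e = y

/-- The set `S` of vertices which do not connect to any cycle. -/
def noCycleSet {V E : Type} (s r : E → V) : Set V :=
  {v : V | ¬ ∃ u : V, Relation.ReflTransGen (eRel s r) v u ∧ Relation.TransGen (eRel s r) u u}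

section Aux

variable {V E : Type} [Fintype E] [DecidableEq V] (s r : E → V) (w : E → ℕ)

/-- The invariant: the support is contained in the set of vertices not connecting to a cycle. -/
def Qinv (a : V →₀ ℕ) : Prop := ∀ v, a v ≠ 0 → v ∈ noCycleSet s r

lemma Qinv_add {a b : V →₀ ℕ} : Qinv s r (a + b) ↔ Qinv s r a ∧ Qinv s r b := by
  constructor
  · intro h
    constructor
    · intro v hv; exact h v (by simp only [Finsupp.add_apply]; omega)
    · intro v hv; exact h v (by simp only [Finsupp.add_apply]; omega)
  · rintro ⟨h1, h2⟩ v hv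
    simp only [Finsupp.add_apply] at hv
    by_cases h : a v = 0
    · exact h2 v (by omega)
    · exact h1 v h

lemma Qinv_zero : Qinv s r (0 : V →₀ ℕ) := by intro v hv; simp at hv

lemma Qinv_sum {ι : Type} (t : Finset ι) (f : ι → (V →₀ ℕ)) :
    Qinv s r (∑ i ∈ t, f i) ↔ ∀ i ∈ t, Qinv s r (f i) := by
  classical
  induction t using Finset.induction with
  | empty => simp [Qinv_zero]
  | insert _ _ hnotmem ih =>
    rw [Finset.sum_insert hnotmem, Qinv_add, ih]
    simp_all

lemma Qinv_single {v : V} {n : ℕ} (hn : n ≠ 0) :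
    Qinv s r (Finsupp.single v n) ↔ v ∈ noCycleSet s r := by
  constructor
  · intro h; exact h v (by simp [hn])
  · intro h x hx
    rcases eq_or_ne x v with rfl | hne
    · exact h
    · simp [Finsupp.single_apply, Ne.symm hne] at hx

lemma mem_noCycleSet_iff {v : V} :
    v ∈ noCycleSet s r ↔ ∀ e : E, s e = v → r e ∈ noCycleSet s r := by
  constructor
  · intro h e hse hre
    rcases hre with ⟨u, hru, hcyc⟩
    exact h ⟨u, Relation.ReflTransGen.head ⟨e, hse, rfl⟩ hru, hcyc⟩
  · intro h hv
    rcases hv with ⟨u, hvu, hcyc⟩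
    rcases Relation.ReflTransGen.cases_head hvu with rfl | ⟨x, hvx, hxu⟩
    · rcases Relation.TransGen.head'_iff.mp hcyc with ⟨x, hvx, hxv⟩
      rcases hvx with ⟨e, hse, hre⟩
      exact h e hse ⟨v, hre ▸ hxv, hcyc⟩
    · rcases hvx with ⟨e, hse, hre⟩
      exact h e hse ⟨u, hre ▸ hxu, hcyc⟩

/-- The congruence that says two elements have equal invariant. -/
def invCon : AddCon (V →₀ ℕ) where
  r a b := Qinv s r a ↔ Qinv s r b
  iseqv := ⟨fun _ => Iff.rfl, Iff.symm, Iff.trans⟩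
  add' {a b c d} h1 h2 := by
    show Qinv s r (a + c) ↔ Qinv s r (b + d)
    rw [Qinv_add, Qinv_add]
    exact and_congr h1 h2

lemma one_le_fwVert (v : V) : 1 ≤ fwVert s w v := le_max_left _ _

lemma invCon_iff {a b : V →₀ ℕ} : invCon s r a b ↔ (Qinv s r a ↔ Qinv s r b) := Iff.rfl

lemma gMk_add (a b : V →₀ ℕ) : gMk s r w (a + b) = gMk s r w a + gMk s r w b :=
  map_add ((addConGen (gRel s r w)).mk') a b

lemma gMk_zero : gMk s r w (0 : V →₀ ℕ) = 0 :=
  map_zero ((addConGen (gRel s r w)).mk')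

lemma gMk_sum {ι : Type} (t : Finset ι) (f : ι → (V →₀ ℕ)) :
    gMk s r w (∑ i ∈ t, f i) = ∑ i ∈ t, gMk s r w (f i) :=
  map_sum ((addConGen (gRel s r w)).mk') f t

lemma gMk_eq_gMk {a b : V →₀ ℕ} (h : addConGen (gRel s r w) a b) :
    gMk s r w a = gMk s r w b :=
  (AddCon.eq _).mpr h

lemma gMk_rel (v : V) :
    gMk s r w (Finsupp.single v (fwVert s w v)) = gMk s r w (frTrans s r v) :=
  gMk_eq_gMk s r w (AddConGen.Rel.of _ _ ⟨v, rfl, rfl⟩)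

lemma addConGen_le_invCon : addConGen (gRel s r w) ≤ invCon s r := by
  apply AddCon.addConGen_le.mpr
  rintro a b ⟨v, rfl, rfl⟩
  rw [invCon_iff]
  rw [Qinv_single s r (by have := one_le_fwVert s w v; omega), frTrans, Qinv_sum,
    mem_noCycleSet_iff s r]
  constructor
  · intro h e he
    rw [Qinv_single s r one_ne_zero]
    exact h e (Finset.mem_filter.mp he).2
  · intro h e he
    have := h e (Finset.mem_filter.mpr ⟨Finset.mem_univ e, he⟩)
    rwa [Qinv_single s r one_ne_zero] at this

end Aux


/-- For a finite weighted graph `(E,w)`, the graph monoid `M(E,w)` is a group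
if and only if `E` is acyclic. -/
theorem graphMonoid_group_iff_acyclic {V E : Type} [Fintype V] [Fintype E] [DecidableEq V]
    (s r : E → V) (w : E → ℕ) (hw : ∀ e : E, 0 < w e) :
    (∀ x : graphMonoid s r w, ∃ y : graphMonoid s r w, x + y = 0) ↔
      ¬ ∃ u : V, Relation.TransGen (eRel s r) u u := by
  constructor
  · -- group → acyclic
    rintro hgrp ⟨u, hu⟩
    obtain ⟨y, hy⟩ := hgrp (gMk s r w (Finsupp.single u 1))
    obtain ⟨b, rfl⟩ := AddCon.mk'_surjective y
    have h0 : gMk s r w (Finsupp.single u 1 + b) = gMk s r w 0 := by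
      rw [gMk_add, gMk_zero]
      exact hy
    have hc : (addConGen (gRel s r w)) (Finsupp.single u 1 + b) 0 := (AddCon.eq _).mp h0
    have hinv := addConGen_le_invCon s r w hc
    rw [invCon_iff] at hinv
    have hq : Qinv s r (Finsupp.single u 1 + b) := hinv.mpr (Qinv_zero s r)
    have := ((Qinv_add s r).mp hq).1
    rw [Qinv_single s r one_ne_zero] at this
    exact this ⟨u, Relation.ReflTransGen.refl, hu⟩
  · -- acyclic → group
    intro hac x
    -- auxiliary: invertibles add
    have inv_add : ∀ {p q : graphMonoid s r w}, (∃ y, p + y = 0) → (∃ y, q + y = 0) →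
        ∃ y, (p + q) + y = 0 := by
      rintro p q ⟨y1, h1⟩ ⟨y2, h2⟩
      exact ⟨y1 + y2, by rw [add_add_add_comm, h1, h2, add_zero]⟩
    have inv_zero : ∃ y : graphMonoid s r w, 0 + y = 0 := ⟨0, by simp⟩
    have inv_sum : ∀ (t : Finset E) (g : E → graphMonoid s r w),
        (∀ e ∈ t, ∃ y, g e + y = 0) → ∃ y, (∑ e ∈ t, g e) + y = 0 := by
      classical
      intro t
      induction t using Finset.induction with
      | empty => intro g _; simpa using inv_zero
      | insert _ _ hnm ih =>
        intro g hg
        rw [Finset.sum_insert hnm]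
        exact inv_add (hg _ (Finset.mem_insert_self _ _))
          (ih g fun e he => hg e (Finset.mem_insert_of_mem he))
    -- well-founded recursion
    have : IsTrans V (fun x y => Relation.TransGen (eRel s r) y x) :=
      ⟨fun _ _ _ hab hbc => hbc.trans hab⟩
    have : IsIrrefl V (fun x y => Relation.TransGen (eRel s r) y x) :=
      ⟨fun a h => hac ⟨a, h⟩⟩
    have wfR := Finite.wellFounded_of_trans_of_irrefl
      (fun x y => Relation.TransGen (eRel s r) y x)
    have key : ∀ v : V, ∃ y, gMk s r w (Finsupp.single v 1) + y = 0 := by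
      intro v
      induction v using wfR.induction with
      | _ v IH =>
        have hrel := gMk_rel s r w v
        have hsum : ∃ y, gMk s r w (frTrans s r v) + y = 0 := by
          rw [frTrans, gMk_sum]
          exact inv_sum _ _ fun e he =>
            IH (r e) (Relation.TransGen.single ⟨e, (Finset.mem_filter.mp he).2, rfl⟩)
        obtain ⟨k, hk⟩ := Nat.exists_eq_add_of_le (one_le_fwVert s w v)
        rw [hk, Finsupp.single_add, gMk_add] at hrel
        obtain ⟨y, hy⟩ := hrel ▸ hsum
        exact ⟨gMk s r w (Finsupp.single v k) + y, by rw [← add_assoc]; exact hy⟩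
    -- singles of any multiplicity
    have keyn : ∀ (n : ℕ) (v : V), ∃ y, gMk s r w (Finsupp.single v n) + y = 0 := by
      intro n
      induction n with
      | zero => intro v; rw [Finsupp.single_zero, gMk_zero]; exact inv_zero
      | succ m ih =>
        intro v
        have : Finsupp.single v (m + 1) = Finsupp.single v m + Finsupp.single v 1 := by
          rw [← Finsupp.single_add]
        rw [this, gMk_add]
        exact inv_add (ih v) (key v)
    obtain ⟨a, rfl⟩ := AddCon.mk'_surjective x
    show ∃ y, gMk s r w a + y = 0
    induction a using Finsupp.induction with
    | zero => rw [gMk_zero]; exact inv_zero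
    | single_add v n f _ _ ih =>
      rw [gMk_add]
      exact inv_add (keyn n v) ih
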